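/- Let S_N ⊂ W_N be the Lie algebra of formal vector fields D = Σ f_i ∂/∂t^i with Σ ∂f_i/∂t^i = 0. Then S_N is a Lie subalgebra of W_N, and the normalizer of S_N in W_N equals S_N ⊕ kE, where E = Σ t^i ∂/∂t^i is the Euler vector field. -/

import Mathlib

open MvPowerSeries Finset


/-- The filtration `F_p O_N` of `O_N = k[[t¹,…,t^N]]`. -/
def s18FO (k : Type*) [Field k] (N : ℕ) (p : ℤ) :
    Submodule k (MvPowerSeries (Fin N) k) where
  carrier := {f | ∀ d : Fin N →₀ ℕ, (d.sum fun _ m => (m : ℤ)) ≤ p →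
    MvPowerSeries.coeff d f = 0}
  add_mem' := by
    intro a b ha hb d hd
    simp [map_add, ha d hd, hb d hd]
  zero_mem' := by intro d hd; simp
  smul_mem' := by
    intro c a ha d hd
    simp [ha d hd]

/-- `D ∈ F_n W_N` iff `D(F_p O_N) ⊆ F_{p+n} O_N` for all `p`. -/
def s18FW (k : Type*) [Field k] (N : ℕ) (n : ℤ) :
    Set (Derivation k (MvPowerSeries (Fin N) k) (MvPowerSeries (Fin N) k)) :=
  {D | ∀ (p : ℤ) (f : MvPowerSeries (Fin N) k), f ∈ s18FO k N p → D f ∈ s18FO k N (p + n)}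

section S18aux
variable {k : Type*} [Field k] {N : ℕ}

lemma s18degZ (d : Fin N →₀ ℕ) : (d.sum fun _ m => (m : ℤ)) = ∑ i, (d i : ℤ) :=
  Finsupp.sum_fintype _ _ (fun _ => rfl)

lemma s18degZ_coord (d : Fin N →₀ ℕ) (i : Fin N) : (d i : ℤ) ≤ d.sum fun _ m => (m : ℤ) := by
  rw [s18degZ]
  exact Finset.single_le_sum (f := fun i => (d i : ℤ)) (fun _ _ => Int.natCast_nonneg _)
    (Finset.mem_univ i)

lemma s18degZ_add (a b : Fin N →₀ ℕ) :
    ((a + b).sum fun _ m => (m : ℤ)) = (a.sum fun _ m => (m : ℤ)) + b.sum fun _ m => (m : ℤ) := by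
  simp only [s18degZ, Finsupp.add_apply]
  push_cast
  rw [← Finset.sum_add_distrib]

lemma s18degZ_single (j : Fin N) : ((Finsupp.single j 1 : Fin N →₀ ℕ).sum fun _ m => (m : ℤ)) = 1 := by
  rw [s18degZ]
  simp [Finsupp.single_apply]

lemma s18FO_mul {p : ℤ} {h : MvPowerSeries (Fin N) k} (hh : h ∈ s18FO k N p)
    (f : MvPowerSeries (Fin N) k) : f * h ∈ s18FO k N p := by
  intro d hd
  rw [MvPowerSeries.coeff_mul]
  apply Finset.sum_eq_zero
  intro q hq
  rw [HasAntidiagonal.mem_antidiagonal] at hq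
  have h2 : (q.2.sum fun _ m => (m : ℤ)) ≤ p := by
    refine le_trans ?_ hd
    rw [← hq, s18degZ_add]
    have : (0 : ℤ) ≤ q.1.sum fun _ m => (m : ℤ) := by
      rw [s18degZ]; exact Finset.sum_nonneg fun _ _ => Int.natCast_nonneg _
    linarith
  rw [hh q.2 h2, mul_zero]

variable (pd : Fin N → (MvPowerSeries (Fin N) k →ₗ[k] MvPowerSeries (Fin N) k))
  (hpd : ∀ (i : Fin N) (f : MvPowerSeries (Fin N) k) (d : Fin N →₀ ℕ),
      MvPowerSeries.coeff d (pd i f)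
        = (d i + 1) • MvPowerSeries.coeff (d + Finsupp.single i 1) f)

include hpd

lemma s18pd_FO {p : ℤ} (j : Fin N) {f : MvPowerSeries (Fin N) k} (hf : f ∈ s18FO k N p) :
    pd j f ∈ s18FO k N (p - 1) := by
  intro d hd
  rw [hpd]
  have : ((d + Finsupp.single j 1).sum fun _ m => (m : ℤ)) ≤ p := by
    rw [s18degZ_add, s18degZ_single]; linarith
  rw [hf _ this, smul_zero]

lemma s18pd_one (j : Fin N) : pd j (1 : MvPowerSeries (Fin N) k) = 0 := by
  ext d
  rw [hpd, MvPowerSeries.coeff_one, map_zero]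
  have : d + Finsupp.single j 1 ≠ 0 := by
    intro h
    have := DFunLike.congr_fun h j
    simp [Finsupp.single_apply] at this
  simp [this]

lemma s18pd_X (j i : Fin N) :
    pd j (MvPowerSeries.X i : MvPowerSeries (Fin N) k) = if j = i then 1 else 0 := by
  ext d
  rw [hpd, MvPowerSeries.coeff_X]
  by_cases hji : j = i
  · subst hji
    by_cases hd : d = 0
    · subst hd; simp
    · have h1 : d + Finsupp.single j 1 ≠ Finsupp.single j 1 := by
        intro h
        exact hd (by simpa using add_right_cancel (h.trans (zero_add (Finsupp.single j 1)).symm))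
      simp [h1, MvPowerSeries.coeff_one, hd]
  · have h1 : d + Finsupp.single j 1 ≠ Finsupp.single i 1 := by
      intro h
      have := DFunLike.congr_fun h j
      simp [Finsupp.single_apply, Ne.symm hji] at this
    simp [h1, hji]


lemma s18pd_comm (i j : Fin N) (f : MvPowerSeries (Fin N) k) :
    pd i (pd j f) = pd j (pd i f) := by
  ext d
  rw [hpd, hpd, hpd, hpd]
  rw [smul_smul, smul_smul]
  have h1 : d + Finsupp.single i 1 + Finsupp.single j 1
      = d + Finsupp.single j 1 + Finsupp.single i 1 := by
    rw [add_assoc, add_assoc, add_comm (Finsupp.single i 1)]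
  rw [h1]
  congr 1
  simp only [Finsupp.add_apply, Finsupp.single_apply]
  by_cases hij : i = j
  · subst hij; simp
  · simp [hij, Ne.symm hij]; ring


lemma s18pd_leibniz (j : Fin N) (f g : MvPowerSeries (Fin N) k) :
    pd j (f * g) = f * pd j g + g * pd j f := by
  classical
  ext d
  set e : Fin N →₀ ℕ := Finsupp.single j 1 with he
  have hej : e j = 1 := by simp [he]
  have keyA : ∑ p ∈ antidiagonal (d + e),
      (p.1 j) • (MvPowerSeries.coeff p.1 f * MvPowerSeries.coeff p.2 g)
      = ∑ p ∈ antidiagonal d,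
      (p.1 j + 1) • (MvPowerSeries.coeff (p.1 + e) f * MvPowerSeries.coeff p.2 g) := by
    have h1 := Finset.sum_filter_of_ne (s := antidiagonal (d + e)) (p := fun p => p.1 j ≠ 0)
      (f := fun p => (p.1 j) • (MvPowerSeries.coeff p.1 f * MvPowerSeries.coeff p.2 g))
      (by intro p _ hne h0; exact hne (by simp [h0]))
    rw [← h1]
    refine Finset.sum_nbij' (fun q => (q.1 - e, q.2)) (fun p => (p.1 + e, p.2)) ?_ ?_ ?_ ?_ ?_
    · intro q hq
      simp only [Finset.mem_filter, HasAntidiagonal.mem_antidiagonal] at hq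
      have hle : e ≤ q.1 := Finsupp.single_le_iff.mpr (Nat.one_le_iff_ne_zero.mpr hq.2)
      rw [HasAntidiagonal.mem_antidiagonal]
      have h2 : (q.1 - e) + q.2 + e = d + e := by
        rw [add_right_comm, tsub_add_cancel_of_le hle, hq.1]
      exact add_right_cancel h2
    · intro p hp
      rw [HasAntidiagonal.mem_antidiagonal] at hp
      simp only [Finset.mem_filter, HasAntidiagonal.mem_antidiagonal]
      exact ⟨by rw [add_right_comm, hp], by simp [hej]⟩
    · intro q hq
      simp only [Finset.mem_filter, HasAntidiagonal.mem_antidiagonal] at hq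
      have hle : e ≤ q.1 := Finsupp.single_le_iff.mpr (Nat.one_le_iff_ne_zero.mpr hq.2)
      simp [tsub_add_cancel_of_le hle]
    · intro p _; simp
    · intro q hq
      simp only [Finset.mem_filter, HasAntidiagonal.mem_antidiagonal] at hq
      have hle : e ≤ q.1 := Finsupp.single_le_iff.mpr (Nat.one_le_iff_ne_zero.mpr hq.2)
      have h3 : (q.1 - e) j + 1 = q.1 j := by
        rw [Finsupp.tsub_apply, hej, Nat.sub_add_cancel (Nat.one_le_iff_ne_zero.mpr hq.2)]
      rw [tsub_add_cancel_of_le hle, h3]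
  have keyB : ∑ p ∈ antidiagonal (d + e),
      (p.2 j) • (MvPowerSeries.coeff p.1 f * MvPowerSeries.coeff p.2 g)
      = ∑ p ∈ antidiagonal d,
      (p.2 j + 1) • (MvPowerSeries.coeff p.1 f * MvPowerSeries.coeff (p.2 + e) g) := by
    have h1 := Finset.sum_filter_of_ne (s := antidiagonal (d + e)) (p := fun p => p.2 j ≠ 0)
      (f := fun p => (p.2 j) • (MvPowerSeries.coeff p.1 f * MvPowerSeries.coeff p.2 g))
      (by intro p _ hne h0; exact hne (by simp [h0]))
    rw [← h1]
    refine Finset.sum_nbij' (fun q => (q.1, q.2 - e)) (fun p => (p.1, p.2 + e)) ?_ ?_ ?_ ?_ ?_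
    · intro q hq
      simp only [Finset.mem_filter, HasAntidiagonal.mem_antidiagonal] at hq
      have hle : e ≤ q.2 := Finsupp.single_le_iff.mpr (Nat.one_le_iff_ne_zero.mpr hq.2)
      rw [HasAntidiagonal.mem_antidiagonal]
      have h2 : q.1 + (q.2 - e) + e = d + e := by
        rw [add_assoc, tsub_add_cancel_of_le hle, hq.1]
      exact add_right_cancel h2
    · intro p hp
      rw [HasAntidiagonal.mem_antidiagonal] at hp
      simp only [Finset.mem_filter, HasAntidiagonal.mem_antidiagonal]
      exact ⟨by rw [← add_assoc, hp], by simp [hej]⟩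
    · intro q hq
      simp only [Finset.mem_filter, HasAntidiagonal.mem_antidiagonal] at hq
      have hle : e ≤ q.2 := Finsupp.single_le_iff.mpr (Nat.one_le_iff_ne_zero.mpr hq.2)
      simp [tsub_add_cancel_of_le hle]
    · intro p _; simp
    · intro q hq
      simp only [Finset.mem_filter, HasAntidiagonal.mem_antidiagonal] at hq
      have hle : e ≤ q.2 := Finsupp.single_le_iff.mpr (Nat.one_le_iff_ne_zero.mpr hq.2)
      have h3 : (q.2 - e) j + 1 = q.2 j := by
        rw [Finsupp.tsub_apply, hej, Nat.sub_add_cancel (Nat.one_le_iff_ne_zero.mpr hq.2)]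
      rw [tsub_add_cancel_of_le hle, h3]
  have hL : MvPowerSeries.coeff d (pd j (f * g))
      = (∑ p ∈ antidiagonal d,
          (p.1 j + 1) • (MvPowerSeries.coeff (p.1 + e) f * MvPowerSeries.coeff p.2 g))
        + ∑ p ∈ antidiagonal d,
          (p.2 j + 1) • (MvPowerSeries.coeff p.1 f * MvPowerSeries.coeff (p.2 + e) g) := by
    rw [hpd, MvPowerSeries.coeff_mul, Finset.smul_sum, ← keyA, ← keyB, ← Finset.sum_add_distrib]
    refine Finset.sum_congr rfl ?_
    intro p hp
    rw [HasAntidiagonal.mem_antidiagonal] at hp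
    have h4 : d j + 1 = p.1 j + p.2 j := by
      have h5 := DFunLike.congr_fun hp j
      simp only [Finsupp.add_apply] at h5
      rw [h5]; simp [hej]
    rw [h4, add_smul]
  have hswap : ∑ p ∈ antidiagonal d,
      (p.2 j + 1) • (MvPowerSeries.coeff p.1 g * MvPowerSeries.coeff (p.2 + e) f)
      = ∑ p ∈ antidiagonal d,
      (p.1 j + 1) • (MvPowerSeries.coeff (p.1 + e) f * MvPowerSeries.coeff p.2 g) := by
    refine Finset.sum_nbij' (fun p => (p.2, p.1)) (fun p => (p.2, p.1)) ?_ ?_ ?_ ?_ ?_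
    · intro p hp; rw [HasAntidiagonal.mem_antidiagonal] at hp ⊢; rw [add_comm, hp]
    · intro p hp; rw [HasAntidiagonal.mem_antidiagonal] at hp ⊢; rw [add_comm, hp]
    · intro p _; rfl
    · intro p _; rfl
    · intro p _; dsimp only; rw [mul_comm]
  have hR1 : MvPowerSeries.coeff d (f * pd j g)
      = ∑ p ∈ antidiagonal d,
        (p.2 j + 1) • (MvPowerSeries.coeff p.1 f * MvPowerSeries.coeff (p.2 + e) g) := by
    rw [MvPowerSeries.coeff_mul]
    refine Finset.sum_congr rfl ?_
    intro p _
    rw [hpd, mul_smul_comm]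
  have hR2 : MvPowerSeries.coeff d (g * pd j f)
      = ∑ p ∈ antidiagonal d,
        (p.1 j + 1) • (MvPowerSeries.coeff (p.1 + e) f * MvPowerSeries.coeff p.2 g) := by
    rw [MvPowerSeries.coeff_mul, ← hswap]
    refine Finset.sum_congr rfl ?_
    intro p _
    rw [hpd, mul_smul_comm]
  rw [map_add, hL, hR1, hR2, add_comm]


lemma s18rep (hN : 0 < N) {m : ℤ}
    {D : Derivation k (MvPowerSeries (Fin N) k) (MvPowerSeries (Fin N) k)}
    (hD : D ∈ s18FW k N m) (g : MvPowerSeries (Fin N) k) :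
    D g = ∑ j, D (MvPowerSeries.X j) * pd j g := by
  classical
  -- polynomials
  have poly : ∀ P : MvPolynomial (Fin N) k,
      D (P : MvPowerSeries (Fin N) k) = ∑ j, D (MvPowerSeries.X j) * pd j (P : MvPowerSeries (Fin N) k) := by
    intro P
    induction P using MvPolynomial.induction_on with
    | C c =>
      have hc : ((MvPolynomial.C c : MvPolynomial (Fin N) k) : MvPowerSeries (Fin N) k)
          = c • (1 : MvPowerSeries (Fin N) k) := by
        rw [MvPolynomial.coe_C]
        ext d
        rw [MvPowerSeries.coeff_C, MvPowerSeries.coeff_smul, MvPowerSeries.coeff_one]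
        split_ifs <;> simp
      rw [hc, Derivation.map_smul, Derivation.map_one_eq_zero, smul_zero]
      symm
      apply Finset.sum_eq_zero
      intro j _
      rw [map_smul, s18pd_one pd hpd, smul_zero, mul_zero]
    | add p q hp hq =>
      push_cast
      rw [map_add, hp, hq, ← Finset.sum_add_distrib]
      refine Finset.sum_congr rfl fun j _ => ?_
      rw [map_add, mul_add]
    | mul_X p i hp =>
      push_cast
      have step : ∀ j, D (MvPowerSeries.X j) * pd j ((p : MvPowerSeries (Fin N) k) * MvPowerSeries.X i)
          = (p : MvPowerSeries (Fin N) k) * (D (MvPowerSeries.X j) * pd j (MvPowerSeries.X i))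
            + MvPowerSeries.X i * (D (MvPowerSeries.X j) * pd j (p : MvPowerSeries (Fin N) k)) := by
        intro j
        rw [s18pd_leibniz pd hpd]
        ring
      have hXsum : ∑ j, D (MvPowerSeries.X j) * pd j (MvPowerSeries.X i : MvPowerSeries (Fin N) k)
          = D (MvPowerSeries.X i) := by
        rw [Finset.sum_congr rfl fun j _ => by rw [s18pd_X pd hpd j i]]
        simp
      calc D ((p : MvPowerSeries (Fin N) k) * MvPowerSeries.X i)
          = (p : MvPowerSeries (Fin N) k) * D (MvPowerSeries.X i)
            + MvPowerSeries.X i * D (p : MvPowerSeries (Fin N) k) := by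
            simp only [Derivation.leibniz, smul_eq_mul]
        _ = (p : MvPowerSeries (Fin N) k)
              * (∑ j, D (MvPowerSeries.X j) * pd j (MvPowerSeries.X i : MvPowerSeries (Fin N) k))
            + MvPowerSeries.X i
              * (∑ j, D (MvPowerSeries.X j) * pd j (p : MvPowerSeries (Fin N) k)) := by
            rw [hXsum, ← hp]
        _ = ∑ j, D (MvPowerSeries.X j) * pd j ((p : MvPowerSeries (Fin N) k) * MvPowerSeries.X i) := by
            rw [Finset.mul_sum, Finset.mul_sum, ← Finset.sum_add_distrib]
            exact Finset.sum_congr rfl fun j _ => (step j).symm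
  -- general case
  ext d
  set n : ℕ := (d.sum fun _ m => m) + m.natAbs + 1 with hn
  have hcast : (d.sum fun _ m => (m : ℤ)) = ((d.sum fun _ m => m : ℕ) : ℤ) := by
    rw [s18degZ]
    rw [Finsupp.sum_fintype _ _ (fun _ => rfl)]
    push_cast; rfl
  have hdn : (d.sum fun _ m => (m : ℤ)) < n := by omega
  set bnd : Fin N →₀ ℕ := Finsupp.equivFunOnFinite.symm (fun _ => n + 1) with hbnd
  have hbnd_apply : ∀ i, bnd i = n + 1 := fun i => rfl
  set P : MvPolynomial (Fin N) k := MvPowerSeries.trunc k bnd g with hP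
  set h : MvPowerSeries (Fin N) k := g - (P : MvPowerSeries (Fin N) k) with hh
  have hmem : h ∈ s18FO k N (n : ℤ) := by
    intro e he
    have hlt : e < bnd := by
      have hco : ∀ i, e i < bnd i := by
        intro i
        rw [hbnd_apply]
        have h1 : (e i : ℤ) ≤ e.sum fun _ m => (m : ℤ) := s18degZ_coord e i
        omega
      refine lt_of_le_of_ne (fun i => le_of_lt (hco i)) ?_
      intro hcontra
      obtain ⟨i0⟩ := Fin.pos_iff_nonempty.mp hN
      exact absurd (DFunLike.congr_fun hcontra i0) (Nat.ne_of_lt (hco i0))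
    rw [hh, map_sub, MvPolynomial.coeff_coe, MvPowerSeries.coeff_trunc, if_pos hlt, sub_self]
  have hg : g = (P : MvPowerSeries (Fin N) k) + h := by rw [hh]; ring
  have hDh : MvPowerSeries.coeff d (D h) = 0 := by
    have := hD (n : ℤ) h hmem
    refine this d ?_
    omega
  have hRh : MvPowerSeries.coeff d (∑ j, D (MvPowerSeries.X j) * pd j h) = 0 := by
    rw [map_sum]
    apply Finset.sum_eq_zero
    intro j _
    have h1 : pd j h ∈ s18FO k N ((n : ℤ) - 1) := s18pd_FO pd hpd j hmem
    have h2 : D (MvPowerSeries.X j) * pd j h ∈ s18FO k N ((n : ℤ) - 1) := s18FO_mul h1 _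
    refine h2 d ?_
    omega
  have hDg : MvPowerSeries.coeff d (D g)
      = MvPowerSeries.coeff d (D (P : MvPowerSeries (Fin N) k)) := by
    rw [hg, map_add, map_add, hDh, add_zero]
  have hRg : MvPowerSeries.coeff d (∑ j, D (MvPowerSeries.X j) * pd j g)
      = MvPowerSeries.coeff d (∑ j, D (MvPowerSeries.X j) * pd j (P : MvPowerSeries (Fin N) k)) := by
    have : (∑ j, D (MvPowerSeries.X j) * pd j g)
        = (∑ j, D (MvPowerSeries.X j) * pd j (P : MvPowerSeries (Fin N) k))
          + ∑ j, D (MvPowerSeries.X j) * pd j h := by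
      rw [hg, ← Finset.sum_add_distrib]
      exact Finset.sum_congr rfl fun j _ => by rw [map_add, mul_add]
    rw [this, map_add, hRh, add_zero]
  rw [hDg, hRg, poly]

lemma s18pd_comp (hN : 0 < N) {m : ℤ}
    {A : Derivation k (MvPowerSeries (Fin N) k) (MvPowerSeries (Fin N) k)}
    (hA : A ∈ s18FW k N m) (i : Fin N) (g : MvPowerSeries (Fin N) k) :
    pd i (A g) = A (pd i g) + ∑ j, pd i (A (MvPowerSeries.X j)) * pd j g := by
  conv_lhs => rw [s18rep pd hpd hN hA g]
  rw [map_sum]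
  have step : ∀ j, pd i (A (MvPowerSeries.X j) * pd j g)
      = A (MvPowerSeries.X j) * pd j (pd i g) + pd i (A (MvPowerSeries.X j)) * pd j g := by
    intro j
    rw [s18pd_leibniz pd hpd, s18pd_comm pd hpd]
    ring
  rw [Finset.sum_congr rfl fun j _ => step j, Finset.sum_add_distrib,
    ← s18rep pd hpd hN hA (pd i g)]

lemma s18div_bracket (hN : 0 < N) {mA mB : ℤ}
    {A B : Derivation k (MvPowerSeries (Fin N) k) (MvPowerSeries (Fin N) k)}
    (hA : A ∈ s18FW k N mA) (hB : B ∈ s18FW k N mB) :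
    ∑ i, pd i (⁅A, B⁆ (MvPowerSeries.X i))
      = A (∑ i, pd i (B (MvPowerSeries.X i))) - B (∑ i, pd i (A (MvPowerSeries.X i))) := by
  have step : ∀ i, pd i (⁅A, B⁆ (MvPowerSeries.X i))
      = (A (pd i (B (MvPowerSeries.X i)))
          + ∑ j, pd i (A (MvPowerSeries.X j)) * pd j (B (MvPowerSeries.X i)))
        - (B (pd i (A (MvPowerSeries.X i)))
          + ∑ j, pd i (B (MvPowerSeries.X j)) * pd j (A (MvPowerSeries.X i))) := by
    intro i
    have h1 := s18pd_comp pd hpd hN hA i (B (MvPowerSeries.X i))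
    have h2 := s18pd_comp pd hpd hN hB i (A (MvPowerSeries.X i))
    have h3 : ⁅A, B⁆ (MvPowerSeries.X i)
        = A (B (MvPowerSeries.X i)) - B (A (MvPowerSeries.X i)) := rfl
    rw [h3, map_sub, h1, h2]
  rw [Finset.sum_congr rfl fun i _ => step i, Finset.sum_sub_distrib,
    Finset.sum_add_distrib, Finset.sum_add_distrib, map_sum, map_sum]
  have hcancel : ∑ i, ∑ j, pd i (A (MvPowerSeries.X j)) * pd j (B (MvPowerSeries.X i))
      = ∑ i, ∑ j, pd i (B (MvPowerSeries.X j)) * pd j (A (MvPowerSeries.X i)) := by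
    rw [Finset.sum_comm]
    exact Finset.sum_congr rfl fun i _ => Finset.sum_congr rfl fun j _ => mul_comm _ _
  rw [hcancel]
  ring

omit hpd in
lemma s18FO_mono {p q : ℤ} (h : p ≤ q) {f : MvPowerSeries (Fin N) k} (hf : f ∈ s18FO k N q) :
    f ∈ s18FO k N p := fun d hd => hf d (le_trans hd h)

omit hpd in
lemma s18FW_mono {m m' : ℤ} (h : m' ≤ m)
    {D : Derivation k (MvPowerSeries (Fin N) k) (MvPowerSeries (Fin N) k)}
    (hD : D ∈ s18FW k N m) : D ∈ s18FW k N m' := by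
  intro p f hf
  exact s18FO_mono (by linarith) (hD p f hf)

omit hpd in
lemma s18FW_bracket {mA mB : ℤ}
    {A B : Derivation k (MvPowerSeries (Fin N) k) (MvPowerSeries (Fin N) k)}
    (hA : A ∈ s18FW k N mA) (hB : B ∈ s18FW k N mB) : ⁅A, B⁆ ∈ s18FW k N (mA + mB) := by
  intro p f hf
  have h1 : A (B f) ∈ s18FO k N (p + (mA + mB)) := by
    have := hA (p + mB) (B f) (hB p f hf)
    refine s18FO_mono (by linarith) this
  have h2 : B (A f) ∈ s18FO k N (p + (mA + mB)) := by
    have := hB (p + mA) (A f) (hA p f hf)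
    refine s18FO_mono (by linarith) this
  have : ⁅A, B⁆ f = A (B f) - B (A f) := rfl
  rw [this]
  exact sub_mem h1 h2

omit hpd in
lemma s18FW_sub {m : ℤ}
    {A B : Derivation k (MvPowerSeries (Fin N) k) (MvPowerSeries (Fin N) k)}
    (hA : A ∈ s18FW k N m) (hB : B ∈ s18FW k N m) : A - B ∈ s18FW k N m := by
  intro p f hf
  have : (A - B) f = A f - B f := rfl
  rw [this]
  exact sub_mem (hA p f hf) (hB p f hf)

omit hpd in
lemma s18FW_smul {m : ℤ} (c : k)
    {A : Derivation k (MvPowerSeries (Fin N) k) (MvPowerSeries (Fin N) k)}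
    (hA : A ∈ s18FW k N m) : c • A ∈ s18FW k N m := by
  intro p f hf
  have : (c • A) f = c • A f := rfl
  rw [this]
  exact Submodule.smul_mem _ _ (hA p f hf)

end S18aux

noncomputable def s18pdDer {k : Type*} [Field k] {N : ℕ}
    (pd : Fin N → (MvPowerSeries (Fin N) k →ₗ[k] MvPowerSeries (Fin N) k))
    (hpd : ∀ (i : Fin N) (f : MvPowerSeries (Fin N) k) (d : Fin N →₀ ℕ),
      MvPowerSeries.coeff d (pd i f)
        = (d i + 1) • MvPowerSeries.coeff (d + Finsupp.single i 1) f)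
    (i : Fin N) : Derivation k (MvPowerSeries (Fin N) k) (MvPowerSeries (Fin N) k) :=
  Derivation.mk' (pd i) (fun a b => by
    rw [s18pd_leibniz pd hpd i a b, smul_eq_mul, smul_eq_mul])

section S18aux
variable {k : Type*} [Field k] {N : ℕ}
variable (pd : Fin N → (MvPowerSeries (Fin N) k →ₗ[k] MvPowerSeries (Fin N) k))
  (hpd : ∀ (i : Fin N) (f : MvPowerSeries (Fin N) k) (d : Fin N →₀ ℕ),
      MvPowerSeries.coeff d (pd i f)
        = (d i + 1) • MvPowerSeries.coeff (d + Finsupp.single i 1) f)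
include hpd

lemma s18pdDer_apply (i : Fin N) (f : MvPowerSeries (Fin N) k) :
    s18pdDer pd hpd i f = pd i f := rfl

lemma s18pd_FW (i : Fin N) : s18pdDer pd hpd i ∈ s18FW k N (-1) := by
  intro p f hf
  rw [s18pdDer_apply]
  exact s18FO_mono (by linarith) (s18pd_FO pd hpd i hf)

omit hpd in
lemma s18C_eq_smul_one (c : k) :
    (MvPowerSeries.C c : MvPowerSeries (Fin N) k) = c • (1 : MvPowerSeries (Fin N) k) := by
  ext d
  rw [MvPowerSeries.coeff_C, MvPowerSeries.coeff_smul, MvPowerSeries.coeff_one]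
  split_ifs <;> simp

lemma s18eq_C [CharZero k] {g : MvPowerSeries (Fin N) k} (h0 : ∀ i, pd i g = 0) :
    g = MvPowerSeries.C (MvPowerSeries.coeff 0 g) := by
  ext d
  rw [MvPowerSeries.coeff_C]
  split_ifs with hd
  · subst hd; rfl
  · by_contra hne
    have hex : ∃ i, d i ≠ 0 := by
      by_contra hall
      push_neg at hall
      exact hd (Finsupp.ext fun i => hall i)
    obtain ⟨i, hi⟩ := hex
    have hle : Finsupp.single i 1 ≤ d := Finsupp.single_le_iff.mpr (Nat.one_le_iff_ne_zero.mpr hi)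
    have hdd : (d - Finsupp.single i 1) + Finsupp.single i 1 = d := tsub_add_cancel_of_le hle
    have h1 : MvPowerSeries.coeff (d - Finsupp.single i 1) (pd i g) = 0 := by
      rw [h0 i, map_zero]
    rw [hpd, hdd] at h1
    rw [nsmul_eq_mul] at h1
    rcases mul_eq_zero.mp h1 with h2 | h2
    · exact (Nat.cast_ne_zero (R := k)).mpr (Nat.succ_ne_zero _) h2
    · exact hne h2

variable (E : Derivation k (MvPowerSeries (Fin N) k) (MvPowerSeries (Fin N) k))
  (hE : ∀ (f : MvPowerSeries (Fin N) k) (d : Fin N →₀ ℕ),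
      MvPowerSeries.coeff d (E f) = (d.sum fun _ m => m) • MvPowerSeries.coeff d f)

include hE

omit hpd in
lemma s18E_X (i : Fin N) : E (MvPowerSeries.X i) = MvPowerSeries.X i := by
  ext d
  rw [hE, MvPowerSeries.coeff_X]
  split_ifs with h
  · subst h
    have : ((Finsupp.single i 1 : Fin N →₀ ℕ).sum fun _ m => m) = 1 := by
      rw [Finsupp.sum_single_index]; rfl
    rw [this, one_smul]
  · rw [smul_zero]

omit hpd in
lemma s18E_FW : E ∈ s18FW k N 0 := by
  intro p f hf d hd
  rw [hE, hf d (by omega), smul_zero]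

omit hE in
lemma s18Xdiv : ∑ i, pd i (MvPowerSeries.X i : MvPowerSeries (Fin N) k)
    = (N : ℕ) • (1 : MvPowerSeries (Fin N) k) := by
  rw [Finset.sum_congr rfl fun i _ => by rw [s18pd_X pd hpd i i, if_pos rfl]]
  simp

end S18aux


/-- `S_N = { D ∈ W_N : Div D = 0 }` is a Lie subalgebra of `W_N` (the
continuous derivations of `k[[t¹,…,t^N]]`), and the normalizer of `S_N` in `W_N` is
`S_N ⊕ kE`, where `E` is the Euler vector field.  The divergence is
`Div D = ∑ᵢ ∂(D tⁱ)/∂tⁱ`, with the partial derivatives `∂/∂tⁱ` characterized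
coefficientwise. -/
theorem stmt18 (k : Type*) [Field k] [CharZero k] (N : ℕ) (hN : 2 ≤ N)
    (pd : Fin N → (MvPowerSeries (Fin N) k →ₗ[k] MvPowerSeries (Fin N) k))
    (hpd : ∀ (i : Fin N) (f : MvPowerSeries (Fin N) k) (d : Fin N →₀ ℕ),
      MvPowerSeries.coeff d (pd i f)
        = (d i + 1) • MvPowerSeries.coeff (d + Finsupp.single i 1) f)
    (E : Derivation k (MvPowerSeries (Fin N) k) (MvPowerSeries (Fin N) k))
    (hE : ∀ (f : MvPowerSeries (Fin N) k) (d : Fin N →₀ ℕ),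
      MvPowerSeries.coeff d (E f) = (d.sum fun _ m => m) • MvPowerSeries.coeff d f) :
    letI Div : Derivation k (MvPowerSeries (Fin N) k) (MvPowerSeries (Fin N) k) →
        MvPowerSeries (Fin N) k :=
      fun D => ∑ i, pd i (D (MvPowerSeries.X i))
    letI Smem : Derivation k (MvPowerSeries (Fin N) k) (MvPowerSeries (Fin N) k) → Prop :=
      fun D => (∃ m : ℤ, D ∈ s18FW k N m) ∧ Div D = 0
    (∀ D D', Smem D → Smem D' → Smem ⁅D, D'⁆) ∧
    (∀ D : Derivation k (MvPowerSeries (Fin N) k) (MvPowerSeries (Fin N) k),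
      (∃ m : ℤ, D ∈ s18FW k N m) →
      ((∀ A, Smem A → Smem ⁅D, A⁆) ↔ ∃ c : k, Smem (D - c • E))) := by
  classical
  have hN0 : 0 < N := by omega
  have hNk : (N : k) ≠ 0 := Nat.cast_ne_zero.mpr (by omega)
  constructor
  · rintro D D' ⟨⟨m, hm⟩, hdiv⟩ ⟨⟨m', hm'⟩, hdiv'⟩
    refine ⟨⟨m + m', s18FW_bracket hm hm'⟩, ?_⟩
    show ∑ i, pd i (⁅D, D'⁆ (MvPowerSeries.X i)) = 0
    rw [s18div_bracket pd hpd hN0 hm hm']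
    have h1 : ∑ i, pd i (D' (MvPowerSeries.X i)) = 0 := hdiv'
    have h2 : ∑ i, pd i (D (MvPowerSeries.X i)) = 0 := hdiv
    rw [h1, h2, map_zero, map_zero, sub_zero]
  · rintro D ⟨m, hm⟩
    constructor
    · intro hnorm
      have hpdDiv : ∀ i, pd i (∑ j, pd j (D (MvPowerSeries.X j))) = 0 := by
        intro i
        have hdi_FW := s18pd_FW pd hpd i
        have hdi_div : ∑ j, pd j ((s18pdDer pd hpd i) (MvPowerSeries.X j)) = 0 := by
          apply Finset.sum_eq_zero
          intro j _
          rw [s18pdDer_apply, s18pd_X pd hpd i j]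
          split_ifs
          · rw [s18pd_one pd hpd]
          · rw [map_zero]
        have hbr : ∑ j, pd j (⁅D, s18pdDer pd hpd i⁆ (MvPowerSeries.X j)) = 0 :=
          (hnorm _ ⟨⟨-1, hdi_FW⟩, hdi_div⟩).2
        rw [s18div_bracket pd hpd hN0 hm hdi_FW, hdi_div, map_zero, zero_sub,
          neg_eq_zero, s18pdDer_apply] at hbr
        exact hbr
      have hC := s18eq_C pd hpd hpdDiv
      set c0 : k := MvPowerSeries.coeff 0 (∑ j, pd j (D (MvPowerSeries.X j))) with hc0
      refine ⟨c0 / N, ⟨min m 0, ?_⟩, ?_⟩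
      · exact s18FW_sub (s18FW_mono (min_le_left _ _) hm)
          (s18FW_smul _ (s18FW_mono (min_le_right _ _) (s18E_FW E hE)))
      · show ∑ i, pd i ((D - (c0 / N) • E) (MvPowerSeries.X i)) = 0
        have happ : ∀ i : Fin N, (D - (c0 / N) • E) (MvPowerSeries.X i)
            = D (MvPowerSeries.X i) - (c0 / N) • (MvPowerSeries.X i) := by
          intro i
          have h4 : (D - (c0 / N) • E) (MvPowerSeries.X i)
              = D (MvPowerSeries.X i) - (c0 / N) • E (MvPowerSeries.X i) := rfl
          rw [h4, s18E_X E hE]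
        rw [Finset.sum_congr rfl fun i _ => by rw [happ i, map_sub, map_smul],
          Finset.sum_sub_distrib, ← Finset.smul_sum, s18Xdiv pd hpd, hC]
        rw [s18C_eq_smul_one, ← Nat.cast_smul_eq_nsmul k, smul_smul, div_mul_cancel₀ _ hNk,
          sub_self]
    · rintro ⟨c, ⟨⟨m1, hm1⟩, hdiv1⟩⟩ A ⟨⟨mA, hmA⟩, hdivA⟩
      refine ⟨⟨m + mA, s18FW_bracket hm hmA⟩, ?_⟩
      show ∑ i, pd i (⁅D, A⁆ (MvPowerSeries.X i)) = 0
      rw [s18div_bracket pd hpd hN0 hm hmA]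
      have h1 : ∑ i, pd i (A (MvPowerSeries.X i)) = 0 := hdivA
      have h2 : ∑ i, pd i ((D - c • E) (MvPowerSeries.X i)) = 0 := hdiv1
      rw [h1, map_zero, zero_sub, neg_eq_zero]
      have hDdiv : ∑ i, pd i (D (MvPowerSeries.X i))
          = c • ((N : ℕ) • (1 : MvPowerSeries (Fin N) k)) := by
        have hsub : ∀ i : Fin N, D (MvPowerSeries.X i)
            = (D - c • E) (MvPowerSeries.X i) + c • (MvPowerSeries.X i) := by
          intro i
          have h4 : (D - c • E) (MvPowerSeries.X i)
              = D (MvPowerSeries.X i) - c • E (MvPowerSeries.X i) := rfl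
          rw [h4, s18E_X E hE, sub_add_cancel]
        rw [Finset.sum_congr rfl fun i _ => by rw [hsub i, map_add, map_smul],
          Finset.sum_add_distrib, h2, ← Finset.smul_sum, s18Xdiv pd hpd, zero_add]
      rw [hDdiv, Derivation.map_smul, ← Nat.cast_smul_eq_nsmul k, Derivation.map_smul,
        Derivation.map_one_eq_zero, smul_zero, smul_zero]
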